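/- Let G be a finite simple graph on n ≥ 1 vertices and let k ≥ 1 be an integer. Then c_T^∞(G) ≤ k if and only if c(G) ≤ k, where T = n·C(n+k−1, k) (with C denoting the binomial coefficient). -/

import Mathlib

open SimpleGraph

/-- `c'` is a one-step move of the `k` cops from configuration `c` in `G`:
each cop stays put or moves to an adjacent vertex. -/
def OneStepMove {V : Type*} (G : SimpleGraph V) {k : ℕ} (c c' : Fin k → V) : Prop :=
  ∀ i, c' i = c i ∨ G.Adj (c i) (c' i)

/-- The capture predicate `Cap G T s c r`: from cop configuration `c`, with the robber at `r`,
the cops can capture the robber within `s` time-steps, ending in a configuration in `T`. -/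
def Cap {V : Type*} (G : SimpleGraph V) {k : ℕ} (T : Set (Fin k → V)) :
    ℕ → (Fin k → V) → V → Prop
  | 0, _, _ => False
  | s + 1, c, r => ∃ c', OneStepMove G c c' ∧
      (((∃ i, c' i = r) ∧ c' ∈ T) ∨
        ∀ r', (r' = r ∨ G.Adj r r') →
          (((∃ i, c' i = r') ∧ c' ∈ T) ∨ Cap G T s c' r'))

/-- `k` cops can win a single play on `G` within `t` time-steps. -/
def TimedWin {V : Type*} (G : SimpleGraph V) (k t : ℕ) : Prop :=
  ∃ c : Fin k → V, ∀ r : V,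
    (∃ i, c i = r) ∨ Cap G (Set.univ : Set (Fin k → V)) t c r

/-- The `t`-capture cop number `c_t(G)`. -/
noncomputable def captureCopNumber {V : Type*} (G : SimpleGraph V) (t : ℕ) : ℕ :=
  sInf {k | 1 ≤ k ∧ TimedWin G k t}

/-- `k` cops can win the eternal game on `G`, capturing each robber within `t` time-steps. -/
def EternalWin {V : Type*} (G : SimpleGraph V) (k t : ℕ) : Prop :=
  ∃ T : Set (Fin k → V), T.Nonempty ∧
    ∀ c ∈ T, ∀ r : V, (∃ i, c i = r) ∨ Cap G T t c r

/-- The eternal cop number `c_t^∞(G)`. -/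
noncomputable def eternalCopNumber {V : Type*} (G : SimpleGraph V) (t : ℕ) : ℕ :=
  sInf {k | 1 ≤ k ∧ EternalWin G k t}

/-- The cop number `c(G)`. -/
noncomputable def copNumber {V : Type*} (G : SimpleGraph V) : ℕ :=
  sInf {k | ∃ t, 1 ≤ t ∧ captureCopNumber G t ≤ k}

/-- `ℓ_i = ⌈(1 - 2^{-i}) t - 1/2⌉`. -/
def ell (t i : ℕ) : ℕ :=
  (⌈((1 : ℚ) - 2 ^ (-(i : ℤ))) * (t : ℚ) - 1 / 2⌉).toNat

/-- The subgraph of `G` induced by `W` is a retract of `G`. -/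
def IsRetract {V : Type*} (G : SimpleGraph V) (W : Set V) : Prop :=
  ∃ f : V → V, (∀ v, f v ∈ W) ∧ (∀ w ∈ W, f w = w) ∧
    ∀ u v, G.Adj u v → f u = f v ∨ G.Adj (f u) (f v)

/-- The radius of a graph. -/
noncomputable def graphRadius {V : Type*} (G : SimpleGraph V) : ℕ :=
  sInf {r | ∃ v, ∀ u, G.dist v u ≤ r}

section Aux

variable {V : Type*} {k : ℕ} (G : SimpleGraph V)

lemma cap_mono_set {T T' : Set (Fin k → V)} (h : T ⊆ T') :
    ∀ (s : ℕ) (c : Fin k → V) (r : V), Cap G T s c r → Cap G T' s c r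
  | 0, _, _, hc => hc.elim
  | s+1, c, r, ⟨c', hm, hcap⟩ => ⟨c', hm, by
      rcases hcap with ⟨hi, ht⟩ | hall
      · exact Or.inl ⟨hi, h ht⟩
      · exact Or.inr fun r' hr' => (hall r' hr').imp (fun ⟨hi, ht⟩ => ⟨hi, h ht⟩)
          (cap_mono_set h s c' r')⟩

lemma cap_succ {T : Set (Fin k → V)} :
    ∀ (s : ℕ) (c : Fin k → V) (r : V), Cap G T s c r → Cap G T (s+1) c r
  | 0, _, _, hc => hc.elim
  | s+1, c, r, ⟨c', hm, hcap⟩ => ⟨c', hm, by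
      rcases hcap with h | hall
      · exact Or.inl h
      · exact Or.inr fun r' hr' => (hall r' hr').imp id (cap_succ s c' r')⟩

lemma cap_mono_time {T : Set (Fin k → V)} {s s' : ℕ} (h : s ≤ s') {c : Fin k → V} {r : V}
    (hc : Cap G T s c r) : Cap G T s' c r := by
  induction s' with
  | zero => exact (Nat.le_zero.mp h) ▸ hc
  | succ m ih =>
    rcases Nat.lt_or_ge s (m+1) with hlt | hge
    · exact cap_succ G m c r (ih (Nat.lt_succ_iff.mp hlt))
    · exact (Nat.le_antisymm h hge) ▸ hc

lemma cap_perm (σ : Equiv.Perm (Fin k)) :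
    ∀ (s : ℕ) (c : Fin k → V) (r : V), Cap G Set.univ s c r → Cap G Set.univ s (c ∘ σ) r
  | 0, _, _, hc => hc.elim
  | s+1, c, r, ⟨c', hm, hcap⟩ => ⟨c' ∘ σ, fun i => hm (σ i), by
      rcases hcap with ⟨⟨i, hi⟩, -⟩ | hall
      · exact Or.inl ⟨⟨σ.symm i, by simp [Function.comp, hi]⟩, trivial⟩
      · refine Or.inr fun r' hr' => ?_
        rcases hall r' hr' with ⟨⟨i, hi⟩, -⟩ | hc
        · exact Or.inl ⟨⟨σ.symm i, by simp [Function.comp, hi]⟩, trivial⟩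
        · exact Or.inr (cap_perm σ s c' r' hc)⟩

lemma exists_perm_of_ofFn_eq [Fintype V] {c c' : Fin k → V}
    (h : Multiset.ofList (List.ofFn c) = Multiset.ofList (List.ofFn c')) :
    ∃ σ : Equiv.Perm (Fin k), c' = c ∘ σ := by
  classical
  letI : LinearOrder V := LinearOrder.lift' (Fintype.equivFin V) (Equiv.injective _)
  have hp : List.Perm (List.ofFn c) (List.ofFn c') := Multiset.coe_eq_coe.mp h
  have hs : c ∘ Tuple.sort c = c' ∘ Tuple.sort c' := by
    apply List.ofFn_injective
    refine List.Perm.eq_of_sortedLE ((Tuple.monotone_sort c).sortedLE_ofFn)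
      ((Tuple.monotone_sort c').sortedLE_ofFn) ?_
    exact ((Tuple.sort c).ofFn_comp_perm c).trans
      (hp.trans ((Tuple.sort c').ofFn_comp_perm c').symm)
  refine ⟨(Tuple.sort c').symm.trans (Tuple.sort c), ?_⟩
  funext x
  have := congrFun hs ((Tuple.sort c').symm x)
  simp only [Function.comp] at this ⊢
  simp only [Equiv.trans_apply]
  rw [this]
  simp

end Aux

section Main

variable {V : Type*} {k : ℕ}

/-- Auxiliary winning predicate. -/
def PP (G : SimpleGraph V) (s : ℕ) (c : Fin k → V) (r : V) : Prop :=
  (∃ i, c i = r) ∨ Cap G Set.univ s c r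

variable (G : SimpleGraph V)

lemma pp_mono {s s' : ℕ} (h : s ≤ s') {c : Fin k → V} {r : V} (hp : PP G s c r) :
    PP G s' c r :=
  hp.imp id (cap_mono_time G h)

lemma pp_congr [Fintype V] {c c' : Fin k → V}
    (h : Multiset.ofList (List.ofFn c) = Multiset.ofList (List.ofFn c'))
    (s : ℕ) (r : V) : PP G s c r → PP G s c' r := by
  obtain ⟨σ, rfl⟩ := exists_perm_of_ofFn_eq h
  rintro (⟨i, hi⟩ | hc)
  · exact Or.inl ⟨σ.symm i, by simp [Function.comp, hi]⟩
  · exact Or.inr (cap_perm G σ s c r hc)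

lemma pp_step {s s' : ℕ} (h : ∀ (c : Fin k → V) (r : V), PP G s c r → PP G s' c r) :
    ∀ (c : Fin k → V) (r : V), Cap G Set.univ (s+1) c r → Cap G Set.univ (s'+1) c r := by
  rintro c r ⟨c', hm, hcap⟩
  refine ⟨c', hm, ?_⟩
  rcases hcap with ⟨hi, -⟩ | hall
  · exact Or.inl ⟨hi, trivial⟩
  · refine Or.inr fun r' hr' => ?_
    have : PP G s c' r' := by
      rcases hall r' hr' with ⟨hi, -⟩ | hc
      · exact Or.inl hi
      · exact Or.inr hc
    exact (h c' r' this).imp (fun hi => ⟨hi, trivial⟩) id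

lemma pp_stab {s₀ : ℕ} (hs : ∀ (c : Fin k → V) (r : V), PP G s₀ c r ↔ PP G (s₀+1) c r) :
    ∀ m, s₀ ≤ m → ∀ (c : Fin k → V) (r : V), PP G m c r ↔ PP G s₀ c r := by
  intro m hm
  induction m, hm using Nat.le_induction with
  | base => exact fun c r => Iff.rfl
  | succ m hm ih =>
    intro c r
    constructor
    · rintro (hi | hc)
      · exact (hs c r).mpr (pp_mono G (Nat.le_succ s₀) (Or.inl hi))
      · exact (hs c r).mpr (Or.inr (pp_step G (fun c r => (ih c r).mp) c r hc))
    · exact fun hp => pp_mono G (by omega) hp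

lemma eternalWin_of_timedWin [Fintype V] (hk : 1 ≤ k) (hV : Nonempty V) {t : ℕ}
    (ht : ∃ c : Fin k → V, ∀ r : V,
      (∃ i, c i = r) ∨ Cap G (Set.univ : Set (Fin k → V)) t c r) :
    ∃ T : Set (Fin k → V), T.Nonempty ∧
      ∀ c ∈ T, ∀ r : V, (∃ i, c i = r) ∨
        Cap G T (Fintype.card V * (Fintype.card V + k - 1).choose k) c r := by
  classical
  set n := Fintype.card V with hn
  set M := n * (n + k - 1).choose k with hM
  let key : (Fin k → V) × V → Multiset V × V :=
    fun p => (Multiset.ofList (List.ofFn p.1), p.2)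
  let A : ℕ → Finset ((Fin k → V) × V) :=
    fun s => Finset.univ.filter (fun p => PP G s p.1 p.2)
  let B : ℕ → Finset (Multiset V × V) := fun s => (A s).image key
  have hmemA : ∀ s p, p ∈ A s ↔ PP G s p.1 p.2 := by
    intro s p; simp [A]
  have hAmono : ∀ {s s' : ℕ}, s ≤ s' → A s ⊆ A s' := by
    intro s s' h p hp
    exact (hmemA s' p).mpr (pp_mono G h ((hmemA s p).mp hp))
  have hBA : ∀ s, B s = B (s+1) → A s = A (s+1) := by
    intro s hB
    refine Finset.Subset.antisymm (hAmono (Nat.le_succ s)) fun p hp => ?_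
    have : key p ∈ B s := by rw [hB]; exact Finset.mem_image_of_mem key hp
    obtain ⟨q, hq, hkey⟩ := Finset.mem_image.mp this
    have h1 : Multiset.ofList (List.ofFn q.1) = Multiset.ofList (List.ofFn p.1) :=
      (Prod.ext_iff.mp hkey).1
    have h2 : q.2 = p.2 := (Prod.ext_iff.mp hkey).2
    have := pp_congr G h1 s p.2 (h2 ▸ (hmemA s q).mp hq)
    exact (hmemA s p).mpr this
  -- the ambient finset bounding B
  have hBcard : ∀ s, (B s).card ≤ M := by
    intro s
    have hsub : B s ⊆ Finset.univ.image
        (fun q : Sym V k × V => ((q.1 : Multiset V), q.2)) := by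
      intro x hx
      obtain ⟨p, _, rfl⟩ := Finset.mem_image.mp hx
      refine Finset.mem_image.mpr ⟨(⟨Multiset.ofList (List.ofFn p.1), by simp⟩, p.2),
        Finset.mem_univ _, rfl⟩
    calc (B s).card ≤ _ := Finset.card_le_card hsub
      _ ≤ Fintype.card (Sym V k × V) := (Finset.card_image_le).trans (by simp)
      _ = M := by
        rw [Fintype.card_prod, Sym.card_sym_eq_choose, hM, hn, Nat.mul_comm]
  have hchain : ∀ s : ℕ, (∃ s₀ < s, A s₀ = A (s₀+1)) ∨ s + 1 ≤ (B s).card := by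
    intro s
    induction s with
    | zero =>
      right
      have : (fun _ : Fin k => Classical.arbitrary V, Classical.arbitrary V) ∈ A 0 := by
        refine (hmemA 0 _).mpr (Or.inl ⟨⟨0, hk⟩, rfl⟩)
      have : (B 0).Nonempty := ⟨key _, Finset.mem_image_of_mem key this⟩
      exact Finset.Nonempty.card_pos this
    | succ s ih =>
      rcases ih with ⟨s₀, hs₀, hEq⟩ | hcard
      · exact Or.inl ⟨s₀, by omega, hEq⟩
      by_cases hAs : A s = A (s+1)
      · exact Or.inl ⟨s, by omega, hAs⟩
      · right
        have hne : B s ≠ B (s+1) := fun h => hAs (hBA s h)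
        have hss : B s ⊂ B (s+1) :=
          Finset.ssubset_iff_subset_ne.mpr ⟨Finset.image_subset_image (hAmono (Nat.le_succ s)), hne⟩
        have := Finset.card_lt_card hss
        omega
  obtain ⟨s₀, hs₀M, hA⟩ : ∃ s₀ < M, A s₀ = A (s₀+1) := by
    rcases hchain M with h | h
    · exact h
    · exact absurd (h.trans (hBcard M)) (by omega)
  have hpt : ∀ (c : Fin k → V) (r : V), PP G s₀ c r ↔ PP G (s₀+1) c r := by
    intro c r
    have := Finset.ext_iff.mp hA (c, r)
    rw [hmemA, hmemA] at this
    exact this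
  have hstab := pp_stab G hpt
  obtain ⟨c₀, hc₀⟩ := ht
  set W : Set (Fin k → V) := {c | ∀ r, PP G M c r} with hW
  have toM : ∀ {s} {c : Fin k → V} {r}, PP G s c r → PP G M c r := by
    intro s c r h
    have h1 : PP G (max s s₀) c r := pp_mono G (le_max_left _ _) h
    have h2 : PP G s₀ c r := (hstab (max s s₀) (le_max_right _ _) c r).mp h1
    exact (hstab M (le_of_lt hs₀M) c r).mpr h2
  have hc₀W : c₀ ∈ W := fun r => toM (hc₀ r)
  have hclosed : ∀ c ∈ W, ∀ c', OneStepMove G c c' → c' ∈ W := by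
    intro c hc c' hmv r
    have hcap : Cap G Set.univ (M+1) c' r := by
      refine ⟨c, fun i => (hmv i).imp Eq.symm (fun h => h.symm), Or.inr fun r' _ => ?_⟩
      rcases hc r' with ⟨i, hi⟩ | h
      · exact Or.inl ⟨⟨i, hi⟩, trivial⟩
      · exact Or.inr h
    exact toM (Or.inr hcap)
  have capW : ∀ s, ∀ c ∈ W, ∀ r, Cap G Set.univ s c r → Cap G W s c r := by
    intro s
    induction s with
    | zero => exact fun c _ r h => h.elim
    | succ m ih =>
      rintro c hc r ⟨c', hmv, hcap⟩
      have hc'W : c' ∈ W := hclosed c hc c' hmv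
      refine ⟨c', hmv, ?_⟩
      rcases hcap with ⟨hi, -⟩ | hall
      · exact Or.inl ⟨hi, hc'W⟩
      · exact Or.inr fun r' hr' =>
          (hall r' hr').imp (fun h => ⟨h.1, hc'W⟩) (ih c' hc'W r')
  exact ⟨W, ⟨c₀, hc₀W⟩, fun c hc r => (hc r).imp id (capW M c hc r)⟩

end Main

lemma multichoose_mono_right {n : ℕ} (hn : 1 ≤ n) :
    ∀ {a b : ℕ}, a ≤ b → Nat.multichoose n a ≤ Nat.multichoose n b := by
  intro a b hab
  induction b, hab using Nat.le_induction with
  | base => exact le_refl _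
  | succ b hb ih =>
    refine ih.trans ?_
    obtain ⟨m, rfl⟩ : ∃ m, n = m + 1 := ⟨n - 1, by omega⟩
    rw [Nat.multichoose_succ_succ]
    exact Nat.le_add_left _ _

lemma choose_bound_mono {n a b : ℕ} (hn : 1 ≤ n) (hab : a ≤ b) :
    (n + a - 1).choose a ≤ (n + b - 1).choose b := by
  rw [← Nat.multichoose_eq, ← Nat.multichoose_eq]
  exact multichoose_mono_right hn hab


/-- With `T = n·C(n+k−1,k)`, `c_T^∞(G) ≤ k` iff `c(G) ≤ k`. -/
theorem eternalCopNumber_le_iff_copNumber_le {V : Type*} [Fintype V] (G : SimpleGraph V)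
    (n : ℕ) (hn : n = Fintype.card V) (hn1 : 1 ≤ n) (k : ℕ) (hk : 1 ≤ k) :
    eternalCopNumber G (n * (n + k - 1).choose k) ≤ k ↔ copNumber G ≤ k := by
  classical
  set Tt := n * (n + k - 1).choose k with hTt
  have hV : Nonempty V := Fintype.card_pos_iff.mp (hn ▸ hn1)
  have hTt1 : 1 ≤ Tt := Nat.mul_pos hn1 (Nat.choose_pos (by omega))
  -- a surjective configuration of n cops
  obtain ⟨csur, hsur⟩ : ∃ c : Fin n → V, ∀ r, ∃ i, c i = r := by
    refine ⟨fun i => (Fintype.equivFin V).symm (Fin.cast hn i), fun r => ?_⟩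
    exact ⟨Fin.cast hn.symm (Fintype.equivFin V r), by simp⟩
  have hTWn : ∀ t, TimedWin G n t := fun t => ⟨csur, fun r => Or.inl (hsur r)⟩
  constructor
  · -- eternal ⇒ cop number
    intro h
    have hne : {k' | 1 ≤ k' ∧ EternalWin G k' Tt}.Nonempty :=
      ⟨n, hn1, ⟨{csur}, ⟨csur, rfl⟩, fun c hc r => Or.inl (by rw [Set.mem_singleton_iff] at hc; rw [hc]; exact hsur r)⟩⟩
    have hmem := Nat.sInf_mem hne
    obtain ⟨hk₀1, T, hTne, hTwin⟩ := hmem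
    obtain ⟨c, hcT⟩ := hTne
    have hTW : TimedWin G (sInf {k' | 1 ≤ k' ∧ EternalWin G k' Tt}) Tt :=
      ⟨c, fun r => (hTwin c hcT r).imp id (cap_mono_set G (Set.subset_univ T) Tt c r)⟩
    have h1 : captureCopNumber G Tt ≤ sInf {k' | 1 ≤ k' ∧ EternalWin G k' Tt} :=
      Nat.sInf_le ⟨hk₀1, hTW⟩
    exact Nat.sInf_le ⟨Tt, hTt1, h1.trans h⟩
  · -- cop number ⇒ eternal
    intro h
    have hcopne : {k' | ∃ t, 1 ≤ t ∧ captureCopNumber G t ≤ k'}.Nonempty :=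
      ⟨n, 1, le_refl 1, Nat.sInf_le ⟨hn1, hTWn 1⟩⟩
    obtain ⟨t, ht1, hct⟩ := Nat.sInf_mem hcopne
    have hctk : captureCopNumber G t ≤ k := hct.trans h
    have hcapne : {k' | 1 ≤ k' ∧ TimedWin G k' t}.Nonempty := ⟨n, hn1, hTWn t⟩
    obtain ⟨hk₀1, hk₀win⟩ := Nat.sInf_mem hcapne
    set k₀ := captureCopNumber G t with hk₀
    obtain ⟨c₀, hc₀⟩ := hk₀win
    have hEW := eternalWin_of_timedWin G (k := k₀) (t := t) hk₀1 hV ⟨c₀, hc₀⟩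
    rw [← hn] at hEW
    obtain ⟨W, hWne, hWwin⟩ := hEW
    have hle : n * (n + k₀ - 1).choose k₀ ≤ Tt :=
      Nat.mul_le_mul_left n (choose_bound_mono hn1 hctk)
    have hEW' : EternalWin G k₀ Tt := by
      refine ⟨W, hWne, ?_⟩
      intro c hc r
      exact (hWwin c hc r).imp id (fun hcap => cap_mono_time G hle hcap)
    have hmem' : k₀ ∈ {k' | 1 ≤ k' ∧ EternalWin G k' Tt} := ⟨hk₀1, hEW'⟩
    exact (Nat.sInf_le hmem').trans hctk
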